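/- Let R be a commutative ring such that every minimal prime ideal of R is the radical of a finitely generated ideal. Then R has only finitely many minimal prime ideals. -/

import Mathlib

/-- If every minimal prime of `R` is the radical of a finitely generated ideal,
then `R` has only finitely many minimal primes. -/
theorem minimalPrimes_finite_of_radical_fg {R : Type*} [CommRing R]
    (h : ∀ p ∈ minimalPrimes R, ∃ I : Ideal R, I.FG ∧ I.radical = p) :
    (minimalPrimes R).Finite := by
  classical
  choose I hfg hrad using h
  set S := {p : Ideal R // p ∈ minimalPrimes R}
  set J : S → Ideal R := fun p => I p.1 p.2 with hJ
  set A : S → Set (PrimeSpectrum R) := fun p => {x | ¬ J p ≤ x.asIdeal} with hA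
  -- key finite subcover
  have key : ∃ F : Set S, F.Finite ∧ ∀ q (hq : q ∈ minimalPrimes R), ∃ p ∈ F, J p ≤ q := by
    by_contra hF
    push_neg at hF
    have fip : ∀ T : Finset (Set (PrimeSpectrum R)),
        (↑T : Set (Set (PrimeSpectrum R))) ⊆ Set.range A →
        (⋂₀ (↑T : Set (Set (PrimeSpectrum R)))).Nonempty := by
      intro T hT
      have : ∀ t : {t // t ∈ T}, ∃ p : S, A p = t.1 := fun t => hT t.2
      choose g hg using this
      have hfin : (Set.range g).Finite := Set.finite_range g
      obtain ⟨q, hq, hqall⟩ := hF (Set.range g) hfin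
      refine ⟨⟨q, hq.1.1⟩, ?_⟩
      intro t ht
      have h' : (⟨q, hq.1.1⟩ : PrimeSpectrum R) ∈ A (g ⟨t, ht⟩) := hqall _ ⟨⟨t, ht⟩, rfl⟩
      rwa [hg ⟨t, ht⟩] at h'
    obtain ⟨U, hU⟩ := Ultrafilter.exists_ultrafilter_of_finite_inter_nonempty (Set.range A) fip
    -- define the limit prime ideal
    set m : Ideal R :=
      { carrier := {r | {x : PrimeSpectrum R | r ∈ x.asIdeal} ∈ U}
        add_mem' := fun {a b} ha hb => Filter.mem_of_superset (Filter.inter_mem ha hb)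
          (fun x hx => x.asIdeal.add_mem hx.1 hx.2)
        zero_mem' := by
          have : {x : PrimeSpectrum R | (0:R) ∈ x.asIdeal} = Set.univ := by
            ext x; simp
          simp only [Set.mem_setOf_eq, this]; exact Filter.univ_mem
        smul_mem' := fun c a ha => Filter.mem_of_superset ha
          (fun x hx => x.asIdeal.mul_mem_left c hx) } with hm
    have hmem : ∀ r : R, r ∈ m ↔ {x : PrimeSpectrum R | r ∈ x.asIdeal} ∈ U := fun r => Iff.rfl
    have hmp : m.IsPrime := by
      constructor
      · rw [Ideal.ne_top_iff_one]
        intro h1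
        rw [hmem] at h1
        have : {x : PrimeSpectrum R | (1:R) ∈ x.asIdeal} = ∅ := by
          ext x
          simp only [Set.mem_setOf_eq, Set.mem_empty_iff_false, iff_false]
          exact fun hx => x.isPrime.ne_top (Ideal.eq_top_iff_one _ |>.2 hx)
        rw [this] at h1
        exact Filter.empty_notMem _ h1
      · intro a b hab
        rw [hmem] at hab
        have : {x : PrimeSpectrum R | a * b ∈ x.asIdeal} =
            {x | a ∈ x.asIdeal} ∪ {x | b ∈ x.asIdeal} := by
          ext x
          simp only [Set.mem_setOf_eq, Set.mem_union]
          exact ⟨fun hx => x.isPrime.mem_or_mem hx, fun hx =>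
            hx.elim (x.asIdeal.mul_mem_right b) (x.asIdeal.mul_mem_left a)⟩
        rw [this, Ultrafilter.union_mem_iff] at hab
        exact hab
    obtain ⟨p0, hp0, hp0le⟩ := Ideal.exists_minimalPrimes_le (bot_le (a := m))
    have hAp : A ⟨p0, hp0⟩ ∈ U := hU ⟨⟨p0, hp0⟩, rfl⟩
    -- J p0 ≤ m
    have hle0 : I p0 hp0 ≤ p0 := by
      conv_rhs => rw [← hrad p0 hp0]
      exact Ideal.le_radical
    have hJle : J ⟨p0, hp0⟩ ≤ m := le_trans hle0 hp0le
    -- contradiction via generators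
    obtain ⟨s, hs⟩ := hfg p0 hp0
    have hJeq : J ⟨p0, hp0⟩ = Ideal.span ↑s := hs.symm
    have hcup : A ⟨p0, hp0⟩ = ⋃ a ∈ (s : Set R), {x : PrimeSpectrum R | a ∉ x.asIdeal} := by
      ext x
      simp only [hA, Set.mem_setOf_eq, Set.mem_iUnion]
      rw [hJeq]
      constructor
      · intro hx
        by_contra hc
        push_neg at hc
        exact hx (Ideal.span_le.2 fun a ha => hc a ha)
      · rintro ⟨a, ha, hax⟩ hle
        exact hax (hle (Ideal.subset_span ha))
    rw [hcup] at hAp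
    obtain ⟨a, ha, haU⟩ := (Ultrafilter.finite_biUnion_mem_iff s.finite_toSet).1 hAp
    have ham : a ∈ m := hJle (by rw [hJeq]; exact Ideal.subset_span ha)
    rw [hmem] at ham
    have : ({x : PrimeSpectrum R | a ∈ x.asIdeal})ᶜ ∈ U := by
      convert haU using 1
      rfl
    exact (Ultrafilter.compl_mem_iff_notMem.1 this) ham
  obtain ⟨F, hFfin, hcov⟩ := key
  have : minimalPrimes R ⊆ Subtype.val '' F := by
    intro q hq
    obtain ⟨p, hpF, hple⟩ := hcov q hq
    have h1 : p.1 ≤ q := by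
      have := Ideal.radical_mono hple
      rwa [hrad p.1 p.2, hq.1.1.radical] at this
    have h2 : q ≤ p.1 := hq.2 ⟨p.2.1.1, bot_le⟩ h1
    exact ⟨p, hpF, le_antisymm h1 h2⟩
  exact (hFfin.image _).subset this
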